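/- arXiv:1504.02870 — 4 statements merged into one kernel-verified Lean document; each statement's English description precedes it below -/
import Mathlib

section
/- Let β* minimize F(β) = (1/n) Σ_{i∈D} ℓ_i(β) + (λ/2)‖β‖² over ℝ^d, and let β₀ ∈ ℝ^d. Define c = (1/2)(β₀ − λ⁻¹ g₀) and ρ = (1/2)‖β₀ + λ⁻¹ g₀‖, where g₀ = (1/n) Σ_{i∈D} ∇ℓ_i(β₀). Then ‖β* − c‖ ≤ ρ. -/
open InnerProductSpace Set

local notation "⟪" x ", " y "⟫" => @inner ℝ _ _ x y

lemma convex_first_order {E : Type*} [NormedAddCommGroup E] [InnerProductSpace ℝ E]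
    [CompleteSpace E] (f : E → ℝ) (hd : Differentiable ℝ f)
    (hc : ConvexOn ℝ Set.univ f) (x y : E) :
    ⟪gradient f x, y - x⟫ ≤ f y - f x := by
  set φ : ℝ → ℝ := f ∘ (AffineMap.lineMap x y) with hφ
  have hφc : ConvexOn ℝ Set.univ φ := by
    have := hc.comp_affineMap (AffineMap.lineMap x y)
    simpa using this
  have hderiv : HasDerivAt φ ⟪gradient f x, y - x⟫ 0 := by
    have hline : HasDerivAt (fun t : ℝ => AffineMap.lineMap x y t) (y - x) 0 := by
      simp only [AffineMap.lineMap_apply_module']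
      simpa using ((hasDerivAt_id (0:ℝ)).smul_const (y - x)).add_const x
    have hf' : HasFDerivAt f (toDual ℝ E (gradient f x)) (AffineMap.lineMap x y (0:ℝ)) := by
      have := (hd (AffineMap.lineMap x y (0:ℝ))).hasGradientAt
      rw [show AffineMap.lineMap x y (0:ℝ) = x by simp] at this ⊢
      exact this.hasFDerivAt
    have := hf'.comp_hasDerivAt (0:ℝ) hline
    simpa [hφ, toDual_apply_apply] using this
  have := hφc.le_slope_of_hasDerivAt (mem_univ 0) (mem_univ 1) one_pos hderiv
  rw [slope_def_field] at this
  simpa [hφ, AffineMap.lineMap_apply_module'] using this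

theorem ball_containment_of_minimizer
    {d : ℕ} {ι : Type*} (D : Finset ι)
    (ℓ : ι → EuclideanSpace ℝ (Fin d) → ℝ)
    (hdiff : ∀ i ∈ D, Differentiable ℝ (ℓ i))
    (hconv : ∀ i ∈ D, ConvexOn ℝ Set.univ (ℓ i))
    (lam : ℝ) (hlam : 0 < lam)
    (hD : 0 < D.card)
    (βstar β₀ : EuclideanSpace ℝ (Fin d))
    (hmin : ∀ β, (1 / (D.card : ℝ)) * (∑ i ∈ D, ℓ i βstar) + (lam / 2) * ‖βstar‖ ^ 2 ≤
                 (1 / (D.card : ℝ)) * (∑ i ∈ D, ℓ i β) + (lam / 2) * ‖β‖ ^ 2)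
    (g₀ : EuclideanSpace ℝ (Fin d))
    (hg₀ : g₀ = (1 / (D.card : ℝ)) • (∑ i ∈ D, gradient (ℓ i) β₀)) :
    ‖βstar - (1 / 2 : ℝ) • (β₀ - lam⁻¹ • g₀)‖ ≤ (1 / 2) * ‖β₀ + lam⁻¹ • g₀‖ := by
  have hnpos : (0:ℝ) < (D.card : ℝ) := by exact_mod_cast hD
  set n : ℝ := (D.card : ℝ) with hn
  set gs : EuclideanSpace ℝ (Fin d) := (1 / n) • (∑ i ∈ D, gradient (ℓ i) βstar) with hgs
  -- Step 1: optimality condition: gs + lam • βstar = 0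
  have hopt : gs + lam • βstar = 0 := by
    set G : EuclideanSpace ℝ (Fin d) → ℝ :=
      fun β => (1/n) * (∑ i ∈ D, ℓ i β) + (lam/2) * ⟪β, β⟫ with hG
    have hGF : ∀ β : EuclideanSpace ℝ (Fin d),
        G β = (1/n) * (∑ i ∈ D, ℓ i β) + (lam/2) * ‖β‖^2 := by
      intro β; simp only [hG]; rw [real_inner_self_eq_norm_sq]
    have hloc : IsLocalMin G βstar :=
      Filter.Eventually.of_forall fun β => by rw [hGF, hGF]; exact hmin β
    have hsum : HasFDerivAt (fun β : EuclideanSpace ℝ (Fin d) => ∑ i ∈ D, ℓ i β)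
        (∑ i ∈ D, toDual ℝ (EuclideanSpace ℝ (Fin d)) (gradient (ℓ i) βstar)) βstar :=
      HasFDerivAt.fun_sum fun i hi => ((hdiff i hi βstar).hasGradientAt).hasFDerivAt
    have hinner : HasFDerivAt (fun β : EuclideanSpace ℝ (Fin d) => ⟪β, β⟫)
        ((fderivInnerCLM ℝ (βstar, βstar)).comp
          ((ContinuousLinearMap.id ℝ (EuclideanSpace ℝ (Fin d))).prod
            (ContinuousLinearMap.id ℝ (EuclideanSpace ℝ (Fin d))))) βstar :=
      (hasFDerivAt_id βstar).inner ℝ (hasFDerivAt_id βstar)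
    have hGderiv : HasFDerivAt G
        ((1/n) • (∑ i ∈ D, toDual ℝ (EuclideanSpace ℝ (Fin d)) (gradient (ℓ i) βstar)) +
         (lam/2) • ((fderivInnerCLM ℝ (βstar, βstar)).comp
          ((ContinuousLinearMap.id ℝ (EuclideanSpace ℝ (Fin d))).prod
            (ContinuousLinearMap.id ℝ (EuclideanSpace ℝ (Fin d)))))) βstar :=
      (hsum.const_mul (1/n)).add (hinner.const_mul (lam/2))
    have h0 := hloc.fderiv_eq_zero
    rw [hGderiv.fderiv] at h0
    have hzero : ∀ v : EuclideanSpace ℝ (Fin d), ⟪gs + lam • βstar, v⟫ = 0 := by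
      intro v
      have := congrArg (fun Φ : EuclideanSpace ℝ (Fin d) →L[ℝ] ℝ => Φ v) h0
      simp only [ContinuousLinearMap.add_apply, ContinuousLinearMap.smul_apply,
        ContinuousLinearMap.coe_sum', Finset.sum_apply, toDual_apply_apply,
        ContinuousLinearMap.comp_apply, ContinuousLinearMap.prod_apply,
        ContinuousLinearMap.coe_id', id_eq, fderivInnerCLM_apply,
        ContinuousLinearMap.zero_apply, smul_eq_mul] at this
      rw [hgs, inner_add_left, inner_smul_left, inner_smul_left, sum_inner,
        RCLike.conj_to_real, RCLike.conj_to_real]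
      rw [show (⟪v, βstar⟫ : ℝ) = ⟪βstar, v⟫ from real_inner_comm βstar v] at this
      set A := ∑ i ∈ D, ⟪gradient (ℓ i) βstar, v⟫ with hA
      set B := (⟪βstar, v⟫ : ℝ) with hB
      linarith [this]
    have := hzero (gs + lam • βstar)
    exact inner_self_eq_zero.mp this
  -- Step 2: monotonicity of the averaged gradient
  have hmono : (0:ℝ) ≤ ⟪gs - g₀, βstar - β₀⟫ := by
    have hterm : ∀ i ∈ D,
        (0:ℝ) ≤ ⟪gradient (ℓ i) βstar - gradient (ℓ i) β₀, βstar - β₀⟫ := by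
      intro i hi
      have h1 := convex_first_order (ℓ i) (hdiff i hi) (hconv i hi) β₀ βstar
      have h2 := convex_first_order (ℓ i) (hdiff i hi) (hconv i hi) βstar β₀
      have h3 : ⟪gradient (ℓ i) βstar, β₀ - βstar⟫ =
          - ⟪gradient (ℓ i) βstar, βstar - β₀⟫ := by
        rw [← inner_neg_right]; congr 1; abel
      rw [inner_sub_left]
      rw [h3] at h2
      linarith
    have hsumnn : (0:ℝ) ≤ ∑ i ∈ D, ⟪gradient (ℓ i) βstar - gradient (ℓ i) β₀, βstar - β₀⟫ :=
      Finset.sum_nonneg hterm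
    rw [hgs, hg₀, ← smul_sub, inner_smul_left, RCLike.conj_to_real, ← Finset.sum_sub_distrib,
      sum_inner]
    positivity
  -- Step 3: variational inequality
  have hgs_eq : gs = -(lam • βstar) := by
    rw [add_eq_zero_iff_eq_neg] at hopt; exact hopt
  rw [hgs_eq] at hmono
  have hmono' : lam * ⟪βstar, βstar - β₀⟫ + ⟪g₀, βstar - β₀⟫ ≤ 0 := by
    rw [inner_sub_left, inner_neg_left, real_inner_smul_left] at hmono
    linarith
  have hrel : ⟪βstar, βstar - β₀⟫ + lam⁻¹ * ⟪g₀, βstar - β₀⟫ ≤ 0 := by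
    have h := mul_le_mul_of_nonneg_left hmono' (inv_nonneg.mpr hlam.le)
    rw [mul_zero, mul_add, ← mul_assoc, inv_mul_cancel₀ hlam.ne', one_mul] at h
    linarith
  -- Step 4: conclude
  have hρ : (0:ℝ) ≤ (1/2) * ‖β₀ + lam⁻¹ • g₀‖ := by positivity
  refine (pow_le_pow_iff_left₀ (norm_nonneg _) hρ two_ne_zero).mp ?_
  rw [mul_pow, ← real_inner_self_eq_norm_sq, ← real_inner_self_eq_norm_sq]
  rw [inner_sub_right, inner_sub_right] at hrel
  simp only [inner_sub_left, inner_sub_right, inner_add_left, inner_add_right,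
    real_inner_smul_left, real_inner_smul_right, inner_neg_left, inner_neg_right]
  ring_nf
  have c1 : lam⁻¹ * ⟪βstar, g₀⟫ = lam⁻¹ * ⟪g₀, βstar⟫ := by rw [real_inner_comm]
  have c2 : lam⁻¹ * ⟪β₀, g₀⟫ = lam⁻¹ * ⟪g₀, β₀⟫ := by rw [real_inner_comm]
  have c3 : ⟪β₀, βstar⟫ = ⟪βstar, β₀⟫ := real_inner_comm _ _
  linarith [hrel, c1, c2, c3]
end

section
/- (Theorem 1, ball containment form) Let β*_old and β*_new be the minimizers of the old and new L2-regularized empirical risks over training index sets D_old (size n_old) and D_new (size n_new), where D_new is obtained from D_old by adding instances indexed by A (size n_A) and removing instances indexed by R (size n_R). Let Δs = (1/(n_A+n_R)) (Σ_{i∈A} ∇ℓ_i(β*_old) − Σ_{i∈R} ∇ℓ_i(β*_old)). Then ‖β*_new − m‖ ≤ r, where m = ((n_old+n_new)/(2 n_new)) β*_old − (λ⁻¹ (n_A+n_R)/(2 n_new)) Δs and r = (1/2) ‖ ((n_A − n_R)/n_new) β*_old + λ⁻¹ ((n_A+n_R)/n_new) Δs ‖. -/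
section Aux
open RealInnerProductSpace Finset
variable {E : Type*} [NormedAddCommGroup E] [InnerProductSpace ℝ E] [CompleteSpace E]


lemma inner_gradient_eq (f : E → ℝ) (x v : E) :
    ⟪gradient f x, v⟫ = fderiv ℝ f x v := by
  show ⟪(InnerProductSpace.toDual ℝ E).symm (fderiv ℝ f x), v⟫ = fderiv ℝ f x v
  exact InnerProductSpace.toDual_symm_apply

lemma conv_fo (f : E → ℝ) (hd : Differentiable ℝ f) (hc : ConvexOn ℝ Set.univ f) (x y : E) :
    f x + ⟪gradient f x, y - x⟫ ≤ f y := by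
  have key : fderiv ℝ f x (y - x) ≤ f y - f x := by
    set L : ℝ →ᵃ[ℝ] E := AffineMap.lineMap x y with hL
    have hgc : ConvexOn ℝ Set.univ (f ∘ L) := by
      simpa using hc.comp_affineMap L
    have hLfun : (f ∘ L) = fun t : ℝ => f (t • (y - x) + x) := by
      funext t
      simp [hL, AffineMap.lineMap_apply, vsub_eq_sub, vadd_eq_add]
    have hline : HasDerivAt (fun t : ℝ => t • (y - x) + x) (y - x) 0 := by
      simpa using ((hasDerivAt_id (0:ℝ)).smul_const (y - x)).add_const x
    have hLd : HasDerivAt (f ∘ L) (fderiv ℝ f x (y - x)) 0 := by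
      rw [hLfun]
      have := (hd ((0:ℝ) • (y - x) + x)).hasFDerivAt.comp_hasDerivAt 0 hline
      rw [zero_smul, zero_add] at this
      exact this
    have hslope := hgc.le_slope_of_hasDerivAt (Set.mem_univ (0:ℝ)) (Set.mem_univ (1:ℝ))
      one_pos hLd
    have h0 : f (L 0) = f x := by simp [hL]
    have h1 : f (L 1) = f y := by simp [hL]
    have hsl : slope (f ∘ L) 0 1 = f y - f x := by
      simp only [slope, vsub_eq_sub, sub_zero, inv_one, one_smul, Function.comp_apply]
      rw [h0, h1]
    rw [hsl] at hslope
    exact hslope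
  have := inner_gradient_eq f x (y - x)
  linarith

lemma grad_mono (f : E → ℝ) (hd : Differentiable ℝ f) (hc : ConvexOn ℝ Set.univ f) (a b : E) :
    0 ≤ ⟪gradient f b - gradient f a, b - a⟫ := by
  have h1 := conv_fo f hd hc a b
  have h2 := conv_fo f hd hc b a
  have h3 : ⟪gradient f b, a - b⟫ = -⟪gradient f b, b - a⟫ := by
    rw [show a - b = -(b - a) by abel, inner_neg_right]
  rw [inner_sub_left]
  linarith


lemma stationary {ι : Type*} (S : Finset ι) (ℓ : ι → E → ℝ)
    (hdiff : ∀ i, Differentiable ℝ (ℓ i)) (lam : ℝ) (x0 : E) (hS : 0 < S.card)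
    (hmin : ∀ β, (1 / (S.card : ℝ)) * (∑ i ∈ S, ℓ i x0) + (lam / 2) * ‖x0‖ ^ 2 ≤
      (1 / (S.card : ℝ)) * (∑ i ∈ S, ℓ i β) + (lam / 2) * ‖β‖ ^ 2) :
    (∑ i ∈ S, gradient (ℓ i) x0) = (-((S.card : ℝ) * lam)) • x0 := by
  set c : ℝ := 1 / (S.card : ℝ) with hc
  have hcpos : 0 < c := by positivity
  have key : ∀ v : E, c * (∑ i ∈ S, fderiv ℝ (ℓ i) x0 v) + lam * ⟪x0, v⟫ = 0 := by
    intro v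
    set φ : ℝ → ℝ := fun t => c * (∑ i ∈ S, ℓ i (x0 + t • v)) + (lam / 2) * ‖x0 + t • v‖ ^ 2
      with hφdef
    have hline : ∀ t₀ : ℝ, HasDerivAt (fun t : ℝ => x0 + t • v) v t₀ := fun t₀ => by
      simpa using ((hasDerivAt_id t₀).smul_const v).const_add x0
    have h1 : HasDerivAt (fun t : ℝ => ∑ i ∈ S, ℓ i (x0 + t • v))
        (∑ i ∈ S, fderiv ℝ (ℓ i) x0 v) 0 := by
      apply HasDerivAt.fun_sum
      intro i _
      have := ((hdiff i) (x0 + (0:ℝ) • v)).hasFDerivAt.comp_hasDerivAt 0 (hline 0)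
      rw [zero_smul, add_zero] at this
      exact this
    have h2 : HasDerivAt (fun t : ℝ => (lam / 2) * ‖x0 + t • v‖ ^ 2) (lam * ⟪x0, v⟫) 0 := by
      have heq : (fun t : ℝ => (lam / 2) * ‖x0 + t • v‖ ^ 2) =
          fun t => (lam / 2) * (‖x0‖ ^ 2 + 2 * ⟪x0, v⟫ * t + ‖v‖ ^ 2 * t ^ 2) := by
        funext t
        rw [norm_add_sq_real, real_inner_smul_right, norm_smul]
        simp only [Real.norm_eq_abs, mul_pow, sq_abs]
        ring
      rw [heq]
      have hp : HasDerivAt (fun t : ℝ => ‖x0‖ ^ 2 + 2 * ⟪x0, v⟫ * t + ‖v‖ ^ 2 * t ^ 2)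
          (2 * ⟪x0, v⟫) 0 := by
        have ha : HasDerivAt (fun t : ℝ => 2 * ⟪x0, v⟫ * t) (2 * ⟪x0, v⟫) 0 := by
          simpa using (hasDerivAt_id (0:ℝ)).const_mul (2 * ⟪x0, v⟫)
        have hb : HasDerivAt (fun t : ℝ => ‖v‖ ^ 2 * t ^ 2) 0 0 := by
          simpa using (hasDerivAt_pow 2 (0:ℝ)).const_mul (‖v‖ ^ 2)
        exact ((ha.const_add (‖x0‖ ^ 2)).add hb).congr_deriv (by ring)
      have := hp.const_mul (lam / 2)
      exact this.congr_deriv (by ring)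
    have hφ : HasDerivAt φ (c * (∑ i ∈ S, fderiv ℝ (ℓ i) x0 v) + lam * ⟪x0, v⟫) 0 :=
      (h1.const_mul c).add h2
    have hmin0 : IsLocalMin φ 0 := by
      apply Filter.Eventually.of_forall
      intro t
      have := hmin (x0 + t • v)
      simpa [hφdef] using this
    exact hmin0.hasDerivAt_eq_zero hφ
  have hw : ∀ v : E, ⟪c • (∑ i ∈ S, gradient (ℓ i) x0) + lam • x0, v⟫ = 0 := by
    intro v
    rw [inner_add_left, real_inner_smul_left, real_inner_smul_left, sum_inner]
    have : ∀ i ∈ S, ⟪gradient (ℓ i) x0, v⟫ = fderiv ℝ (ℓ i) x0 v := fun i _ => by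
      show ⟪(InnerProductSpace.toDual ℝ E).symm (fderiv ℝ (ℓ i) x0), v⟫ = _
      exact InnerProductSpace.toDual_symm_apply
    rw [Finset.sum_congr rfl this]
    exact key v
  have hz : c • (∑ i ∈ S, gradient (ℓ i) x0) + lam • x0 = 0 := by
    have := hw (c • (∑ i ∈ S, gradient (ℓ i) x0) + lam • x0)
    exact inner_self_eq_zero.mp this
  have hc0 : c ≠ 0 := ne_of_gt hcpos
  have : c • (∑ i ∈ S, gradient (ℓ i) x0) = -(lam • x0) := by
    linear_combination (norm := module) hz
  calc (∑ i ∈ S, gradient (ℓ i) x0) = c⁻¹ • (c • (∑ i ∈ S, gradient (ℓ i) x0)) := by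
        rw [smul_smul, inv_mul_cancel₀ hc0, one_smul]
    _ = c⁻¹ • (-(lam • x0)) := by rw [this]
    _ = (-((S.card : ℝ) * lam)) • x0 := by
        rw [smul_neg, smul_smul, hc]
        have : (S.card : ℝ) ≠ 0 := by positivity
        rw [← neg_smul]
        congr 1
        field_simp

end Aux

open InnerProductSpace
open RealInnerProductSpace Finset

theorem theorem1_ball_containment
    {d : ℕ} {ι : Type*} [DecidableEq ι]
    (Dold Dnew A R : Finset ι)
    (ℓ : ι → EuclideanSpace ℝ (Fin d) → ℝ)
    (hdiff : ∀ i, Differentiable ℝ (ℓ i))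
    (hconv : ∀ i, ConvexOn ℝ Set.univ (ℓ i))
    (lam : ℝ) (hlam : 0 < lam)
    (hA : A ⊆ Dnew) (hR : R ⊆ Dold)
    (hDnew : Dnew = (Dold \ R) ∪ A)
    (hAdisj : Disjoint A (Dold \ R))
    (hnold : 0 < Dold.card) (hnnew : 0 < Dnew.card) (hAR : 0 < A.card + R.card)
    (βold βnew : EuclideanSpace ℝ (Fin d))
    (hminold : ∀ β,
      (1 / (Dold.card : ℝ)) * (∑ i ∈ Dold, ℓ i βold) + (lam / 2) * ‖βold‖ ^ 2 ≤
      (1 / (Dold.card : ℝ)) * (∑ i ∈ Dold, ℓ i β) + (lam / 2) * ‖β‖ ^ 2)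
    (hminnew : ∀ β,
      (1 / (Dnew.card : ℝ)) * (∑ i ∈ Dnew, ℓ i βnew) + (lam / 2) * ‖βnew‖ ^ 2 ≤
      (1 / (Dnew.card : ℝ)) * (∑ i ∈ Dnew, ℓ i β) + (lam / 2) * ‖β‖ ^ 2)
    (Δs m : EuclideanSpace ℝ (Fin d)) (r : ℝ)
    (hΔs : Δs = (1 / ((A.card : ℝ) + (R.card : ℝ))) •
        (∑ i ∈ A, gradient (ℓ i) βold - ∑ i ∈ R, gradient (ℓ i) βold))
    (hm : m = (((Dold.card : ℝ) + (Dnew.card : ℝ)) / (2 * (Dnew.card : ℝ))) • βold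
        - (lam⁻¹ * ((A.card : ℝ) + (R.card : ℝ)) / (2 * (Dnew.card : ℝ))) • Δs)
    (hr : r = (1 / 2) * ‖(((A.card : ℝ) - (R.card : ℝ)) / (Dnew.card : ℝ)) • βold
        + (lam⁻¹ * ((A.card : ℝ) + (R.card : ℝ)) / (Dnew.card : ℝ)) • Δs‖) :
    ‖βnew - m‖ ≤ r := by
  set na := (A.card : ℝ) with hna
  set nr := (R.card : ℝ) with hnr
  set nold := (Dold.card : ℝ) with hnoldd
  set nnew := (Dnew.card : ℝ) with hnnewd
  have hnoldpos : (0:ℝ) < nold := by rw [hnoldd]; exact_mod_cast hnold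
  have hnnewpos : (0:ℝ) < nnew := by rw [hnnewd]; exact_mod_cast hnnew
  have hARpos : (0:ℝ) < na + nr := by rw [hna, hnr]; exact_mod_cast hAR
  have hnnew0 : nnew ≠ 0 := ne_of_gt hnnewpos
  have hlam0 : lam ≠ 0 := ne_of_gt hlam
  have hAR0 : na + nr ≠ 0 := ne_of_gt hARpos
  -- stationarity
  have hold := stationary Dold ℓ hdiff lam βold hnold hminold
  have hnewst := stationary Dnew ℓ hdiff lam βnew hnnew hminnew
  -- sum splitting
  have hsplit : ∑ i ∈ Dnew, gradient (ℓ i) βold =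
      ∑ i ∈ Dold, gradient (ℓ i) βold +
        (∑ i ∈ A, gradient (ℓ i) βold - ∑ i ∈ R, gradient (ℓ i) βold) := by
    rw [hDnew, Finset.sum_union hAdisj.symm, Finset.sum_sdiff_eq_sub hR]
    abel
  have hcard : nnew = nold + na - nr := by
    rw [hnnewd, hDnew, Finset.card_union_of_disjoint hAdisj.symm, Finset.card_sdiff_of_subset hR]
    rw [Nat.cast_add, Nat.cast_sub (Finset.card_le_card hR)]
    ring
  have hT : ∑ i ∈ A, gradient (ℓ i) βold - ∑ i ∈ R, gradient (ℓ i) βold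
      = (na + nr) • Δs := by
    rw [hΔs, smul_smul, mul_one_div, div_self hAR0, one_smul]
  have hgold : ∑ i ∈ Dnew, gradient (ℓ i) βold = (-(nold * lam)) • βold + (na + nr) • Δs := by
    rw [hsplit, hold, hT]
  -- monotonicity
  have hmono : 0 ≤ ⟪∑ i ∈ Dnew, gradient (ℓ i) βnew - ∑ i ∈ Dnew, gradient (ℓ i) βold,
      βnew - βold⟫ := by
    rw [← Finset.sum_sub_distrib, sum_inner]
    exact Finset.sum_nonneg fun i _ => grad_mono (ℓ i) (hdiff i) (hconv i) βold βnew
  set p : EuclideanSpace ℝ (Fin d) := (nold / nnew) • βold - (lam⁻¹ * (na + nr) / nnew) • Δs with hp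
  have hvec : ∑ i ∈ Dnew, gradient (ℓ i) βnew - ∑ i ∈ Dnew, gradient (ℓ i) βold
      = (-(nnew * lam)) • (βnew - p) := by
    rw [hnewst, hgold, hp]
    match_scalars <;> field_simp <;> ring
  have hkey : ⟪βnew - p, βnew - βold⟫ ≤ 0 := by
    rw [hvec, real_inner_smul_left] at hmono
    have hpos : 0 < nnew * lam := mul_pos hnnewpos hlam
    by_contra hX
    push_neg at hX
    nlinarith [mul_pos hpos hX]
  have hm' : βnew - m = (1/2 : ℝ) • ((βnew - βold) + (βnew - p)) := by
    rw [hm, hp]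
    match_scalars
    all_goals field_simp
    all_goals try ring
    all_goals simp
  have hnoldeq : nold = nnew - na + nr := by linarith
  have hrv : ((na - nr) / nnew) • βold + (lam⁻¹ * (na + nr) / nnew) • Δs
      = (βnew - p) - (βnew - βold) := by
    rw [hp, hnoldeq]
    match_scalars <;> field_simp <;> ring
  have h1 := norm_add_sq_real (βnew - βold) (βnew - p)
  have h2 := norm_sub_sq_real (βnew - p) (βnew - βold)
  have hcomm := real_inner_comm (βnew - βold) (βnew - p)
  have hsq : ‖(βnew - βold) + (βnew - p)‖ ^ 2 ≤ ‖(βnew - p) - (βnew - βold)‖ ^ 2 := by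
    rw [h1, h2]
    linarith [hkey, hcomm]
  have hfin : ‖(βnew - βold) + (βnew - p)‖ ≤ ‖(βnew - p) - (βnew - βold)‖ := by
    have := Real.sqrt_le_sqrt hsq
    rwa [Real.sqrt_sq (norm_nonneg _), Real.sqrt_sq (norm_nonneg _)] at this
  rw [hm', hr, hrv, norm_smul]
  simp only [Real.norm_eq_abs]
  rw [abs_of_pos (by norm_num : (0:ℝ) < 1/2)]
  linarith [hfin]
end

section
/- (Theorem 1, bounds form) Under the setup of the incremental learning ball containment, for any η ∈ ℝ^d, ηᵀβ*_new lies in the interval [ηᵀm − ‖η‖ r, ηᵀm + ‖η‖ r], where m = ((n_old+n_new)/(2 n_new)) β*_old − (λ⁻¹ (n_A+n_R)/(2 n_new)) Δs and r = (1/2) ‖ ((n_A−n_R)/n_new) β*_old + λ⁻¹ ((n_A+n_R)/n_new) Δs ‖. -/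
open InnerProductSpace

section Aux

variable {E : Type*} [NormedAddCommGroup E] [InnerProductSpace ℝ E] [CompleteSpace E]

lemma aux_inner_gradient (f : E → ℝ) (x v : E) :
    ⟪gradient f x, v⟫_ℝ = fderiv ℝ f x v := by
  rw [gradient, ← InnerProductSpace.toDual_apply_apply]; simp

lemma aux_convex_grad (f : E → ℝ) (hc : ConvexOn ℝ Set.univ f) (hd : Differentiable ℝ f)
    (x y : E) : f x + ⟪gradient f x, y - x⟫_ℝ ≤ f y := by
  set c : ℝ → E := fun t => (1 - t) • x + t • y with hcdef
  have hceq : (f ∘ (AffineMap.lineMap x y : ℝ →ᵃ[ℝ] E)) = f ∘ c := by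
    funext t; simp [hcdef, AffineMap.lineMap_apply_module]
  have hg : ConvexOn ℝ Set.univ (f ∘ c) := by
    rw [← hceq]; simpa using hc.comp_affineMap (AffineMap.lineMap x y)
  have hc0 : HasDerivAt c (y - x) 0 := by
    have h1 : HasDerivAt (fun t : ℝ => (1 - t) • x + t • y) ((-1 : ℝ) • x + (1:ℝ) • y) 0 :=
      ((((hasDerivAt_id (0:ℝ)).const_sub 1).smul_const x)).add
        ((hasDerivAt_id (0:ℝ)).smul_const y)
    convert h1 using 1
    module
  have hcz : c 0 = x := by simp [hcdef]
  have hD : HasDerivAt (f ∘ c) (fderiv ℝ f x (y - x)) 0 := by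
    have h2 : HasFDerivAt f (fderiv ℝ f x) (c 0) := by rw [hcz]; exact (hd x).hasFDerivAt
    exact h2.comp_hasDerivAt 0 hc0
  have key := hg.le_slope_of_hasDerivAt (Set.mem_univ (0:ℝ)) (Set.mem_univ (1:ℝ)) zero_lt_one hD
  have hc1 : c 1 = y := by simp [hcdef]
  rw [slope_def_field] at key
  simp only [Function.comp, hcz, hc1] at key
  rw [aux_inner_gradient]
  have h3 : (f y - f x) / (1 - 0) = f y - f x := by norm_num
  rw [h3] at key
  linarith

lemma aux_min_grad {ι : Type*} (f : ι → E → ℝ) (T : Finset ι)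
    (hd : ∀ i, Differentiable ℝ (f i)) (cc lam : ℝ) (β : E)
    (hmin : ∀ γ, cc * (∑ i ∈ T, f i β) + (lam / 2) * ‖β‖ ^ 2 ≤
      cc * (∑ i ∈ T, f i γ) + (lam / 2) * ‖γ‖ ^ 2) :
    cc • (∑ i ∈ T, gradient (f i) β) + lam • β = 0 := by
  set G : E → ℝ := fun γ => cc * (∑ i ∈ T, f i γ) + (lam / 2) * ‖γ‖ ^ 2 with hGdef
  have hG : HasFDerivAt G
      (cc • (∑ i ∈ T, fderiv ℝ (f i) β) + (lam / 2) • (2 • innerSL ℝ β)) β :=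
    ((HasFDerivAt.fun_sum (u := T) (fun i _ => (hd i β).hasFDerivAt)).const_mul cc).add
      (((hasStrictFDerivAt_norm_sq β).hasFDerivAt).const_mul (lam / 2))
  have hloc : IsLocalMin G β := Filter.Eventually.of_forall hmin
  have hzero := hloc.hasFDerivAt_eq_zero hG
  set w : E := cc • (∑ i ∈ T, gradient (f i) β) + lam • β with hw
  have hwv : ∀ v, ⟪w, v⟫_ℝ = 0 := by
    intro v
    have h4 := congrFun (congrArg (fun (L : E →L[ℝ] ℝ) => (L : E → ℝ)) hzero) v
    simp only [ContinuousLinearMap.add_apply, ContinuousLinearMap.smul_apply,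
      ContinuousLinearMap.coe_sum', Finset.sum_apply, ContinuousLinearMap.zero_apply,
      smul_eq_mul, nsmul_eq_mul, ContinuousLinearMap.coe_smul', Pi.smul_apply,
      innerSL_apply_apply] at h4
    rw [hw, inner_add_left, real_inner_smul_left, real_inner_smul_left, sum_inner]
    simp only [aux_inner_gradient]
    linarith
  have h5 := hwv w
  rwa [real_inner_self_eq_norm_sq, pow_eq_zero_iff (by norm_num), norm_eq_zero] at h5

end Aux

set_option maxHeartbeats 2000000 in
theorem theorem1_linear_score_bounds
    {d : ℕ} {ι : Type*} [DecidableEq ι]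
    (Dold Dnew A R : Finset ι)
    (ℓ : ι → EuclideanSpace ℝ (Fin d) → ℝ)
    (hdiff : ∀ i, Differentiable ℝ (ℓ i))
    (hconv : ∀ i, ConvexOn ℝ Set.univ (ℓ i))
    (lam : ℝ) (hlam : 0 < lam)
    (hA : A ⊆ Dnew) (hR : R ⊆ Dold)
    (hDnew : Dnew = (Dold \ R) ∪ A)
    (hAdisj : Disjoint A (Dold \ R))
    (hnold : 0 < Dold.card) (hnnew : 0 < Dnew.card) (hAR : 0 < A.card + R.card)
    (βold βnew : EuclideanSpace ℝ (Fin d))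
    (hminold : ∀ β,
      (1 / (Dold.card : ℝ)) * (∑ i ∈ Dold, ℓ i βold) + (lam / 2) * ‖βold‖ ^ 2 ≤
      (1 / (Dold.card : ℝ)) * (∑ i ∈ Dold, ℓ i β) + (lam / 2) * ‖β‖ ^ 2)
    (hminnew : ∀ β,
      (1 / (Dnew.card : ℝ)) * (∑ i ∈ Dnew, ℓ i βnew) + (lam / 2) * ‖βnew‖ ^ 2 ≤
      (1 / (Dnew.card : ℝ)) * (∑ i ∈ Dnew, ℓ i β) + (lam / 2) * ‖β‖ ^ 2)
    (Δs m : EuclideanSpace ℝ (Fin d)) (r : ℝ)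
    (hΔs : Δs = (1 / ((A.card : ℝ) + (R.card : ℝ))) •
        (∑ i ∈ A, gradient (ℓ i) βold - ∑ i ∈ R, gradient (ℓ i) βold))
    (hm : m = (((Dold.card : ℝ) + (Dnew.card : ℝ)) / (2 * (Dnew.card : ℝ))) • βold
        - (lam⁻¹ * ((A.card : ℝ) + (R.card : ℝ)) / (2 * (Dnew.card : ℝ))) • Δs)
    (hr : r = (1 / 2) * ‖(((A.card : ℝ) - (R.card : ℝ)) / (Dnew.card : ℝ)) • βold
        + (lam⁻¹ * ((A.card : ℝ) + (R.card : ℝ)) / (Dnew.card : ℝ)) • Δs‖) :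
    ∀ η : EuclideanSpace ℝ (Fin d),
      ⟪η, m⟫_ℝ - ‖η‖ * r ≤ ⟪η, βnew⟫_ℝ ∧ ⟪η, βnew⟫_ℝ ≤ ⟪η, m⟫_ℝ + ‖η‖ * r := by
  set nold : ℝ := (Dold.card : ℝ) with hnolddef
  set nnew : ℝ := (Dnew.card : ℝ) with hnnewdef
  set nA : ℝ := (A.card : ℝ) with hnAdef
  set nR : ℝ := (R.card : ℝ) with hnRdef
  have hnoldpos : (0:ℝ) < nold := Nat.cast_pos.mpr hnold
  have hnnewpos : (0:ℝ) < nnew := Nat.cast_pos.mpr hnnew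
  have hARpos : (0:ℝ) < nA + nR := by
    have : (0:ℝ) < ((A.card + R.card : ℕ) : ℝ) := by exact_mod_cast hAR
    push_cast at this; linarith
  -- first-order conditions
  have hold := aux_min_grad ℓ Dold hdiff (1 / nold) lam βold hminold
  have hnew := aux_min_grad ℓ Dnew hdiff (1 / nnew) lam βnew hminnew
  set Sold : EuclideanSpace ℝ (Fin d) := ∑ i ∈ Dold, gradient (ℓ i) βold with hSold
  set SnO : EuclideanSpace ℝ (Fin d) := ∑ i ∈ Dnew, gradient (ℓ i) βold with hSnO
  set SnN : EuclideanSpace ℝ (Fin d) := ∑ i ∈ Dnew, gradient (ℓ i) βnew with hSnN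
  have hSoldval : Sold = (-(nold * lam)) • βold := by
    have hs := eq_neg_of_add_eq_zero_left hold
    have h1 : Sold = nold • ((1/nold) • Sold) := by
      rw [smul_smul, mul_one_div, div_self hnoldpos.ne', one_smul]
    rw [h1, hs, smul_neg, smul_smul, ← neg_smul]
  have hSnNval : SnN = (-(nnew * lam)) • βnew := by
    have hs := eq_neg_of_add_eq_zero_left hnew
    have h1 : SnN = nnew • ((1/nnew) • SnN) := by
      rw [smul_smul, mul_one_div, div_self hnnewpos.ne', one_smul]
    rw [h1, hs, smul_neg, smul_smul, ← neg_smul]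
  -- convexity monotonicity
  have hsum1 : (∑ i ∈ Dnew, ℓ i βnew) + ⟪SnN, βold - βnew⟫_ℝ ≤ ∑ i ∈ Dnew, ℓ i βold := by
    have h := Finset.sum_le_sum (fun i (_ : i ∈ Dnew) =>
      aux_convex_grad (ℓ i) (hconv i) (hdiff i) βnew βold)
    rw [Finset.sum_add_distrib] at h
    rwa [hSnN, sum_inner]
  have hsum2 : (∑ i ∈ Dnew, ℓ i βold) + ⟪SnO, βnew - βold⟫_ℝ ≤ ∑ i ∈ Dnew, ℓ i βnew := by
    have h := Finset.sum_le_sum (fun i (_ : i ∈ Dnew) =>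
      aux_convex_grad (ℓ i) (hconv i) (hdiff i) βold βnew)
    rw [Finset.sum_add_distrib] at h
    rwa [hSnO, sum_inner]
  have hmono : 0 ≤ ⟪SnO - SnN, βold - βnew⟫_ℝ := by
    have e1 : ⟪SnO, βnew - βold⟫_ℝ = - ⟪SnO, βold - βnew⟫_ℝ := by
      rw [← inner_neg_right]; congr 1; abel
    rw [inner_sub_left]
    rw [e1] at hsum2
    linarith
  -- sum decomposition
  have hsplit : SnO = Sold - (∑ i ∈ R, gradient (ℓ i) βold) + (∑ i ∈ A, gradient (ℓ i) βold) := by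
    rw [hSnO, hDnew, Finset.sum_union hAdisj.symm, hSold, ← Finset.sum_sdiff hR]
    abel
  have hΔs2 : (∑ i ∈ A, gradient (ℓ i) βold) - (∑ i ∈ R, gradient (ℓ i) βold)
      = (nA + nR) • Δs := by
    rw [hΔs, smul_smul]
    rw [mul_one_div, div_self hARpos.ne', one_smul]
  have hSnOval : SnO = (-(nold * lam)) • βold + (nA + nR) • Δs := by
    rw [hsplit, hSoldval, ← hΔs2]; abel
  -- key strong-convexity inequality
  set gbig : EuclideanSpace ℝ (Fin d) := SnO + (nnew * lam) • βold with hgbigdef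
  have hkey : nnew * lam * ‖βold - βnew‖ ^ 2 ≤ ⟪gbig, βold - βnew⟫_ℝ := by
    have e : gbig = (SnO - SnN) + (nnew * lam) • (βold - βnew) := by
      rw [hgbigdef, hSnNval]; module
    rw [e, inner_add_left, real_inner_smul_left, real_inner_self_eq_norm_sq]
    linarith
  -- cardinality identity
  have hcardnat : Dnew.card + R.card = Dold.card + A.card := by
    have h1 : Dnew.card = (Dold \ R).card + A.card := by
      rw [hDnew, Finset.card_union_of_disjoint hAdisj.symm]
    have h2 : (Dold \ R).card + R.card = Dold.card :=
      Finset.card_sdiff_add_card_eq_card hR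
    omega
  have hcard : nnew + nR = nold + nA := by
    rw [hnnewdef, hnRdef, hnolddef, hnAdef]
    exact_mod_cast hcardnat
  -- center and radius
  set u : EuclideanSpace ℝ (Fin d) := (2 * lam * nnew)⁻¹ • gbig with hu
  have hgbig : gbig = ((nnew - nold) * lam) • βold + (nA + nR) • Δs := by
    rw [hgbigdef, hSnOval]; module
  have h5 : nnew - nold = nA - nR := by linarith
  have hgbig2 : gbig = ((nA - nR) * lam) • βold + (nA + nR) • Δs := by
    rw [hgbig, ← h5]
  have hmval : m = βold - u := by
    rw [hm, hu, hgbig]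
    match_scalars
    · field_simp; ring
    · field_simp
  have hrval : r = ‖u‖ := by
    have hvec : (((nA - nR) / nnew) • βold
        + (lam⁻¹ * (nA + nR) / nnew) • Δs : EuclideanSpace ℝ (Fin d)) = (2:ℝ) • u := by
      rw [hu, hgbig2]
      match_scalars
      · field_simp
      · field_simp
    rw [hr, hvec, norm_smul]
    simp
  have hinv : (0:ℝ) < (2 * lam * nnew)⁻¹ := inv_pos.mpr (mul_pos (mul_pos two_pos hlam) hnnewpos)
  have hinneru : (1/2) * ‖βold - βnew‖ ^ 2 ≤ ⟪u, βold - βnew⟫_ℝ := by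
    rw [hu, real_inner_smul_left]
    have h3 := mul_le_mul_of_nonneg_left hkey (le_of_lt hinv)
    have h4 : (2 * lam * nnew)⁻¹ * (nnew * lam * ‖βold - βnew‖ ^ 2)
        = (1/2) * ‖βold - βnew‖ ^ 2 := by
      field_simp
    linarith
  -- ball containment
  have hball : ‖βnew - m‖ ≤ r := by
    have e : βnew - m = u - (βold - βnew) := by rw [hmval]; abel
    have hsq : ‖βnew - m‖ ^ 2 ≤ ‖u‖ ^ 2 := by
      rw [e, norm_sub_sq_real]
      linarith
    rw [hrval]
    nlinarith [norm_nonneg (βnew - m), norm_nonneg u]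
  -- conclude
  intro η
  have hcs : |⟪η, βnew - m⟫_ℝ| ≤ ‖η‖ * r := by
    refine (abs_real_inner_le_norm η (βnew - m)).trans ?_
    exact mul_le_mul_of_nonneg_left hball (norm_nonneg η)
  rw [inner_sub_right] at hcs
  have := abs_le.mp hcs
  constructor <;> linarith [this.1, this.2]
end

section
/- (Ball containment via suboptimal gradient) With β*_new the minimizer of F(β) = (1/n_new) Σ_{i∈D_new} ℓ_i(β) + (λ/2)‖β‖² and β̂ ∈ ℝ^d arbitrary with full objective gradient g(β̂), we have ‖β*_new − (β̂ − (λ⁻¹/2) g(β̂))‖ ≤ (λ⁻¹/2) ‖g(β̂)‖. -/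
open InnerProductSpace

open RealInnerProductSpace Finset in
private lemma grad_inner_eq {E : Type*} [NormedAddCommGroup E] [InnerProductSpace ℝ E]
    [CompleteSpace E] {f : E → ℝ} {x : E} (hd : DifferentiableAt ℝ f x) (v : E) :
    ⟪gradient f x, v⟫ = fderiv ℝ f x v := by
  have h := (hasGradientAt_iff_hasFDerivAt.mp hd.hasGradientAt).fderiv
  rw [h, InnerProductSpace.toDual_apply_apply]

open RealInnerProductSpace in
private lemma line_hasDerivAt {E : Type*} [NormedAddCommGroup E] [InnerProductSpace ℝ E]
    (x v : E) (t : ℝ) :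
    HasDerivAt (fun t : ℝ => x + t • v) v t := by
  simpa using ((hasDerivAt_id t).smul_const v).const_add x

open RealInnerProductSpace in
private lemma first_order {E : Type*} [NormedAddCommGroup E] [InnerProductSpace ℝ E]
    [CompleteSpace E] {f : E → ℝ} (hd : Differentiable ℝ f)
    (hc : ConvexOn ℝ Set.univ f) (x y : E) :
    ⟪gradient f x, y - x⟫ ≤ f y - f x := by
  set φ : ℝ → ℝ := fun t => f (x + t • (y - x)) with hφ
  have hφc : ConvexOn ℝ Set.univ φ := by
    have := hc.comp_affineMap
      ((AffineMap.lineMap x y : ℝ →ᵃ[ℝ] E))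
    have heq : (f ∘ (AffineMap.lineMap x y : ℝ →ᵃ[ℝ] E)) = φ := by
      funext t
      simp [hφ, AffineMap.lineMap_apply, add_comm]
    rw [heq] at this
    simpa using this
  have hF : HasFDerivAt f (InnerProductSpace.toDual ℝ E (gradient f x)) x :=
    hasGradientAt_iff_hasFDerivAt.mp (hd x).hasGradientAt
  have hF0 : HasFDerivAt f (InnerProductSpace.toDual ℝ E (gradient f x))
      ((fun t : ℝ => x + t • (y - x)) 0) := by simpa using hF
  have hder : HasDerivAt φ (⟪gradient f x, y - x⟫) 0 := by
    have := hF0.comp_hasDerivAt 0 (line_hasDerivAt x (y - x) 0)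
    exact this
  have hslope := hφc.le_slope_of_hasDerivAt (Set.mem_univ 0) (Set.mem_univ 1)
    zero_lt_one hder
  have h01 : slope φ 0 1 = f y - f x := by
    simp [slope_def_field, hφ]
  linarith [hslope.trans_eq h01]

open RealInnerProductSpace Finset in
theorem ball_containment_via_suboptimal_gradient
    {d : ℕ} {ι : Type*} (D : Finset ι)
    (ℓ : ι → EuclideanSpace ℝ (Fin d) → ℝ)
    (hdiff : ∀ i ∈ D, Differentiable ℝ (ℓ i))
    (hconv : ∀ i ∈ D, ConvexOn ℝ Set.univ (ℓ i))
    (lam : ℝ) (hlam : 0 < lam)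
    (hD : 0 < D.card)
    (βnew βhat : EuclideanSpace ℝ (Fin d))
    (hmin : ∀ β, (1 / (D.card : ℝ)) * (∑ i ∈ D, ℓ i βnew) + (lam / 2) * ‖βnew‖ ^ 2 ≤
                 (1 / (D.card : ℝ)) * (∑ i ∈ D, ℓ i β) + (lam / 2) * ‖β‖ ^ 2)
    (g : EuclideanSpace ℝ (Fin d))
    (hg : g = (1 / (D.card : ℝ)) • (∑ i ∈ D, gradient (ℓ i) βhat) + lam • βhat) :
    ‖βnew - (βhat - (lam⁻¹ / 2) • g)‖ ≤ (lam⁻¹ / 2) * ‖g‖ := by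
  set c : ℝ := 1 / (D.card : ℝ) with hc
  have hcpos : 0 < c := by positivity
  -- Stationarity at βnew
  have hstat : c • (∑ i ∈ D, gradient (ℓ i) βnew) + lam • βnew = 0 := by
    set G : EuclideanSpace ℝ (Fin d) := c • (∑ i ∈ D, gradient (ℓ i) βnew) + lam • βnew with hG
    have hinner : ∀ v : EuclideanSpace ℝ (Fin d), ⟪G, v⟫ = 0 := by
      intro v
      set ψ : ℝ → ℝ := fun t => c * (∑ i ∈ D, ℓ i (βnew + t • v)) + (lam / 2) * ‖βnew + t • v‖ ^ 2
        with hψ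
      have hψmin : IsLocalMin ψ 0 := by
        apply Filter.Eventually.of_forall
        intro t
        simpa [hψ] using hmin (βnew + t • v)
      have hder : HasDerivAt ψ (⟪G, v⟫) 0 := by
        have hloss : HasDerivAt (fun t : ℝ => c * (∑ i ∈ D, ℓ i (βnew + t • v)))
            (c * (∑ i ∈ D, ⟪gradient (ℓ i) βnew, v⟫)) 0 := by
          apply HasDerivAt.const_mul
          apply HasDerivAt.fun_sum
          intro i hi
          have hF : HasFDerivAt (ℓ i) (InnerProductSpace.toDual ℝ _ (gradient (ℓ i) βnew))
              ((fun t : ℝ => βnew + t • v) 0) := by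
            simpa using hasGradientAt_iff_hasFDerivAt.mp ((hdiff i hi) βnew).hasGradientAt
          have := hF.comp_hasDerivAt 0 (line_hasDerivAt βnew v 0)
          exact this
        have hnorm : HasDerivAt (fun t : ℝ => (lam / 2) * ‖βnew + t • v‖ ^ 2)
            (lam * ⟪βnew, v⟫) 0 := by
          have heq : (fun t : ℝ => (lam / 2) * ‖βnew + t • v‖ ^ 2)
              = fun t : ℝ => (lam / 2) * (‖βnew‖ ^ 2 + 2 * (t * ⟪βnew, v⟫) + t ^ 2 * ‖v‖ ^ 2) := by
            funext t
            rw [norm_add_sq_real, real_inner_smul_right, norm_smul, Real.norm_eq_abs,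
              mul_pow, sq_abs]
          rw [heq]
          have hpoly : HasDerivAt
              (fun t : ℝ => ‖βnew‖ ^ 2 + 2 * (t * ⟪βnew, v⟫) + t ^ 2 * ‖v‖ ^ 2)
              (2 * ⟪βnew, v⟫) 0 := by
            have h1 : HasDerivAt (fun t : ℝ => 2 * (t * ⟪βnew, v⟫)) (2 * ⟪βnew, v⟫) 0 := by
              simpa using ((hasDerivAt_id (0:ℝ)).mul_const (⟪βnew, v⟫)).const_mul 2
            have h2 : HasDerivAt (fun t : ℝ => t ^ 2 * ‖v‖ ^ 2) 0 0 := by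
              simpa using ((hasDerivAt_pow 2 (0:ℝ)).mul_const (‖v‖ ^ 2))
            exact ((h1.const_add (‖βnew‖ ^ 2)).add h2).congr_deriv (add_zero _)
          have := hpoly.const_mul (lam / 2)
          refine this.congr_deriv ?_
          ring
        have := hloss.add hnorm
        refine this.congr_deriv ?_
        rw [hG, inner_add_left, real_inner_smul_left, real_inner_smul_left, sum_inner]
      have := hψmin.hasDerivAt_eq_zero hder
      exact this
    have := hinner G
    rwa [real_inner_self_eq_norm_sq, pow_eq_zero_iff (two_ne_zero), norm_eq_zero] at this
  -- Monotonicity of gradients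
  have hmono : ∀ i ∈ D,
      0 ≤ ⟪gradient (ℓ i) βhat - gradient (ℓ i) βnew, βhat - βnew⟫ := by
    intro i hi
    have h1 := first_order (hdiff i hi) (hconv i hi) βhat βnew
    have h2 := first_order (hdiff i hi) (hconv i hi) βnew βhat
    have : ⟪gradient (ℓ i) βhat, βnew - βhat⟫ + ⟪gradient (ℓ i) βnew, βhat - βnew⟫ ≤ 0 := by
      linarith
    have hrw : (βnew - βhat) = -(βhat - βnew) := by abel
    rw [hrw, inner_neg_right] at this
    rw [inner_sub_left]
    linarith
  -- Key inequality
  have hkey : lam * ‖βhat - βnew‖ ^ 2 ≤ ⟪g, βhat - βnew⟫ := by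
    have h0 : ⟪c • (∑ i ∈ D, gradient (ℓ i) βnew) + lam • βnew, βhat - βnew⟫ = (0:ℝ) := by
      rw [hstat, inner_zero_left]
    have e1 : ⟪g, βhat - βnew⟫
        = c * (∑ i ∈ D, ⟪gradient (ℓ i) βhat - gradient (ℓ i) βnew, βhat - βnew⟫)
          + lam * ⟪βhat - βnew, βhat - βnew⟫ := by
      rw [hg, inner_add_left, real_inner_smul_left, real_inner_smul_left, sum_inner]
      rw [inner_add_left, real_inner_smul_left, real_inner_smul_left, sum_inner] at h0
      simp only [inner_sub_left, Finset.sum_sub_distrib]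
      ring_nf
      ring_nf at h0
      linarith
    have hsum : 0 ≤ ∑ i ∈ D, ⟪gradient (ℓ i) βhat - gradient (ℓ i) βnew, βhat - βnew⟫ :=
      Finset.sum_nonneg hmono
    have := real_inner_self_eq_norm_sq (βhat - βnew)
    nlinarith [mul_nonneg hcpos.le hsum]
  -- Completing the square
  set k : ℝ := lam⁻¹ / 2 with hk
  have hkpos : 0 < k := by positivity
  have hkl : 2 * k * lam = 1 := by
    field_simp [hk]
    rw [hk]; field_simp
  set u : EuclideanSpace ℝ (Fin d) := βnew - βhat with hu
  have hgoal_eq : βnew - (βhat - k • g) = u + k • g := by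
    rw [hu]; abel
  rw [hgoal_eq]
  have hexp : ‖u + k • g‖ ^ 2 = ‖u‖ ^ 2 + 2 * (k * ⟪u, g⟫) + k ^ 2 * ‖g‖ ^ 2 := by
    rw [norm_add_sq_real, real_inner_smul_right, norm_smul, Real.norm_eq_abs, mul_pow, sq_abs]
  have hug : ⟪u, g⟫ ≤ -(lam * ‖u‖ ^ 2) := by
    have h1 : ⟪u, g⟫ = -⟪g, βhat - βnew⟫ := by
      rw [real_inner_comm, hu]
      have : (βnew - βhat) = -(βhat - βnew) := by abel
      rw [this, inner_neg_right]
    have h2 : ‖u‖ = ‖βhat - βnew‖ := by rw [hu, norm_sub_rev]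
    rw [h1, h2]
    linarith
  have hsq : ‖u + k • g‖ ^ 2 ≤ (k * ‖g‖) ^ 2 := by
    rw [hexp]
    nlinarith [norm_nonneg u, hug]
  nlinarith [norm_nonneg (u + k • g), mul_nonneg hkpos.le (norm_nonneg g)]
end
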